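/- Let (q_j)_{j∈ℤ} be real numbers with q_m ≤ q_j ≤ q_M for all j, let the kernel weights satisfy γ₀ ≥ γ₁ ≥ … ≥ γ_{N−1} ≥ 0, let V₁ be continuously differentiable and V₂ be differentiable, and assume either (V₁' ≤ 0 and V₂' ≥ 0) or (V₁' ≥ 0 and V₂' ≤ 0) on the relevant ranges. Let L₁ be a bound for |V₁'| on the interval of attainable nonlocal values and L₂ a bound for |V₂'| on [q_m, q_M]. Then with V_j := V₁( Σ_{k=0}^{N−1} γ_k V₂(q_{j+k+1}) ), for every j ∈ ℤ one has V_{j−1} − V_j ≥ L₁ L₂ γ₀ ( q_m − q_j ). -/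

import Mathlib

open Finset

/-- Discrete nonlocal velocity `V_j = V₁( Σ_{k=0}^{N-1} γ_k V₂(q_{j+k+1}) )`. -/
noncomputable def discVel (γw : ℕ → ℝ) (N : ℕ) (V₁ V₂ : ℝ → ℝ) (u : ℤ → ℝ) (j : ℤ) : ℝ :=
  V₁ (∑ k ∈ Finset.range N, γw k * V₂ (u (j + (k : ℤ) + 1)))

/-- The interval of attainable nonlocal values
`[ (Σ_k γ_k) · inf_{[q_m,q_M]} V₂ , (Σ_k γ_k) · sup_{[q_m,q_M]} V₂ ]`. -/
noncomputable def attainSet (γw : ℕ → ℝ) (N : ℕ) (V₂ : ℝ → ℝ) (qm qM : ℝ) : Set ℝ :=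
  Set.Icc ((∑ k ∈ Finset.range N, γw k) * sInf (V₂ '' Set.Icc qm qM))
          ((∑ k ∈ Finset.range N, γw k) * sSup (V₂ '' Set.Icc qm qM))

/-- Abel-type bound: for nonneg decreasing weights and `g ≥ c`,
`Σ_{k<N'} γ_{k+1} g k + γ₀ c ≤ Σ_{k<N'+1} γ_k g k`. -/
lemma aux_sum_bound (N' : ℕ) (γw : ℕ → ℝ) (g : ℕ → ℝ) (c : ℝ)
    (hγ0 : ∀ k ≤ N', 0 ≤ γw k) (hγm : ∀ k < N', γw (k + 1) ≤ γw k)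
    (hg : ∀ k ≤ N', c ≤ g k) :
    ∑ k ∈ range N', γw (k + 1) * g k + γw 0 * c ≤ ∑ k ∈ range (N' + 1), γw k * g k := by
  rw [Finset.sum_range_succ]
  have h1 : ∑ k ∈ range N', (γw k - γw (k + 1)) * c
      ≤ ∑ k ∈ range N', (γw k - γw (k + 1)) * g k := by
    refine Finset.sum_le_sum fun k hk => ?_
    have hk' := Finset.mem_range.mp hk
    exact mul_le_mul_of_nonneg_left (hg k hk'.le) (sub_nonneg.mpr (hγm k hk'))
  have h2 : ∑ k ∈ range N', (γw k - γw (k + 1)) * c = (γw 0 - γw N') * c := by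
    rw [← Finset.sum_mul, Finset.sum_range_sub' (fun k => γw k)]
  have h3 : γw N' * c ≤ γw N' * g N' :=
    mul_le_mul_of_nonneg_left (hg N' le_rfl) (hγ0 N' le_rfl)
  have h4 : ∑ k ∈ range N', (γw k - γw (k + 1)) * g k
      = ∑ k ∈ range N', γw k * g k - ∑ k ∈ range N', γw (k + 1) * g k := by
    rw [← Finset.sum_sub_distrib]; congr 1; ext k; ring
  nlinarith [h1, h3]

/-- **Lower bound on the difference of consecutive discrete nonlocal velocities.**
`V_{j-1} - V_j ≥ L₁ L₂ γ₀ (q_m - q_j)` for all `j ∈ ℤ`. -/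
theorem discrete_velocity_difference_lower
    (N : ℕ) (hN : 0 < N) (γw : ℕ → ℝ) (V₁ V₂ : ℝ → ℝ)
    (qm qM L₁ L₂ : ℝ) (q : ℤ → ℝ)
    (hV₁ : ContDiff ℝ 1 V₁) (hV₂ : Differentiable ℝ V₂)
    (hγ_nonneg : ∀ k, k < N → 0 ≤ γw k)
    (hγ_mono : ∀ k, k + 1 < N → γw (k + 1) ≤ γw k)
    (hbd : ∀ j : ℤ, qm ≤ q j ∧ q j ≤ qM)
    (hsign :
      ((∀ x ∈ attainSet γw N V₂ qm qM, deriv V₁ x ≤ 0) ∧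
        (∀ x ∈ Set.Icc qm qM, 0 ≤ deriv V₂ x)) ∨
      ((∀ x ∈ attainSet γw N V₂ qm qM, 0 ≤ deriv V₁ x) ∧
        (∀ x ∈ Set.Icc qm qM, deriv V₂ x ≤ 0)))
    (hL₁ : ∀ a ∈ attainSet γw N V₂ qm qM, |deriv V₁ a| ≤ L₁)
    (hL₂ : ∀ a ∈ Set.Icc qm qM, |deriv V₂ a| ≤ L₂) :
    ∀ j : ℤ, L₁ * L₂ * γw 0 * (qm - q j)
      ≤ discVel γw N V₁ V₂ q (j - 1) - discVel γw N V₁ V₂ q j := by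
  intro j
  obtain ⟨N', rfl⟩ : ∃ N', N = N' + 1 := ⟨N - 1, (Nat.succ_pred_eq_of_pos hN).symm⟩
  set S : ℤ → ℝ := fun i => ∑ k ∈ range (N' + 1), γw k * V₂ (q (i + (k : ℤ) + 1)) with hSdef
  have hqm : qm ≤ qM := le_trans (hbd 0).1 (hbd 0).2
  have hqmem : ∀ i : ℤ, q i ∈ Set.Icc qm qM := fun i => ⟨(hbd i).1, (hbd i).2⟩
  have hγ0 : 0 ≤ γw 0 := hγ_nonneg 0 (Nat.succ_pos _)
  -- bounds on V₂ image
  have hV₂c : Continuous V₂ := hV₂.continuous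
  have hK : IsCompact (V₂ '' Set.Icc qm qM) := isCompact_Icc.image hV₂c
  have hm_le : ∀ x ∈ Set.Icc qm qM, sInf (V₂ '' Set.Icc qm qM) ≤ V₂ x := fun x hx =>
    csInf_le hK.bddBelow ⟨x, hx, rfl⟩
  have hle_M : ∀ x ∈ Set.Icc qm qM, V₂ x ≤ sSup (V₂ '' Set.Icc qm qM) := fun x hx =>
    le_csSup hK.bddAbove ⟨x, hx, rfl⟩
  have hγsum : 0 ≤ ∑ k ∈ range (N' + 1), γw k :=
    Finset.sum_nonneg fun k hk => hγ_nonneg k (Finset.mem_range.mp hk)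
  -- membership of S in attainSet
  have hS : ∀ i : ℤ, S i ∈ attainSet γw (N' + 1) V₂ qm qM := by
    intro i
    constructor
    · rw [Finset.sum_mul]
      refine Finset.sum_le_sum fun k hk => ?_
      exact mul_le_mul_of_nonneg_left (hm_le _ (hqmem _)) (hγ_nonneg k (Finset.mem_range.mp hk))
    · rw [Finset.sum_mul]
      refine Finset.sum_le_sum fun k hk => ?_
      exact mul_le_mul_of_nonneg_left (hle_M _ (hqmem _)) (hγ_nonneg k (Finset.mem_range.mp hk))
  -- nonnegativity of L₂, L₁
  have hL₂0 : 0 ≤ L₂ := le_trans (abs_nonneg _) (hL₂ qm ⟨le_rfl, hqm⟩)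
  have hattne : (∑ k ∈ range (N' + 1), γw k) * sInf (V₂ '' Set.Icc qm qM)
      ∈ attainSet γw (N' + 1) V₂ qm qM := by
    refine ⟨le_rfl, mul_le_mul_of_nonneg_left ?_ hγsum⟩
    exact le_trans (hm_le qm ⟨le_rfl, hqm⟩) (hle_M qm ⟨le_rfl, hqm⟩)
  have hL₁0 : 0 ≤ L₁ := le_trans (abs_nonneg _) (hL₁ _ hattne)
  have hconv : Convex ℝ (attainSet γw (N' + 1) V₂ qm qM) := convex_Icc _ _
  -- Lipschitz bounds
  have lip1 : ∀ x ∈ attainSet γw (N' + 1) V₂ qm qM, ∀ y ∈ attainSet γw (N' + 1) V₂ qm qM,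
      |V₁ y - V₁ x| ≤ L₁ * |y - x| := by
    intro x hx y hy
    have := Convex.norm_image_sub_le_of_norm_deriv_le
      (f := V₁) (s := attainSet γw (N' + 1) V₂ qm qM)
      (fun z _ => (hV₁.differentiable one_ne_zero) z)
      (fun z hz => by rw [Real.norm_eq_abs]; exact hL₁ z hz) hconv hx hy
    simpa [Real.norm_eq_abs] using this
  have lip2 : ∀ x ∈ Set.Icc qm qM, ∀ y ∈ Set.Icc qm qM, |V₂ y - V₂ x| ≤ L₂ * |y - x| := by
    intro x hx y hy
    have := Convex.norm_image_sub_le_of_norm_deriv_le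
      (f := V₂) (s := Set.Icc qm qM) (fun z _ => hV₂ z)
      (fun z hz => by rw [Real.norm_eq_abs]; exact hL₂ z hz) (convex_Icc _ _) hx hy
    simpa [Real.norm_eq_abs] using this
  -- rewrite goal in terms of S
  have hgoal : discVel γw (N' + 1) V₁ V₂ q (j - 1) = V₁ (S (j - 1)) := rfl
  have hgoal2 : discVel γw (N' + 1) V₁ V₂ q j = V₁ (S j) := rfl
  rw [hgoal, hgoal2]
  -- decomposition of S (j-1)
  have hdecomp : S (j - 1) = ∑ k ∈ range N', γw (k + 1) * V₂ (q (j + (k : ℤ) + 1))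
      + γw 0 * V₂ (q j) := by
    simp only [hSdef]
    rw [Finset.sum_range_succ' (fun k => γw k * V₂ (q (j - 1 + (k : ℤ) + 1)))]
    congr 1
    · refine Finset.sum_congr rfl fun k _ => ?_
      congr 2
      push_cast; ring
    · norm_num
  -- key bound: B := γ₀ * L₂ * (q j - qm)
  have hqj : qm ≤ q j := (hbd j).1
  have hB0 : 0 ≤ γw 0 * (L₂ * (q j - qm)) :=
    mul_nonneg hγ0 (mul_nonneg hL₂0 (by linarith))
  have hlip2j : |V₂ (q j) - V₂ qm| ≤ L₂ * (q j - qm) := by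
    have := lip2 qm ⟨le_rfl, hqm⟩ (q j) (hqmem j)
    rwa [abs_of_nonneg (sub_nonneg.mpr hqj)] at this
  have hmain : L₁ * L₂ * γw 0 * (qm - q j) ≤ V₁ (S (j - 1)) - V₁ (S j) := by
    rcases hsign with ⟨h1, h2⟩ | ⟨h1, h2⟩
    · -- V₁ antitone, V₂ nondecreasing
      have hmono2 : MonotoneOn V₂ (Set.Icc qm qM) :=
        monotoneOn_of_deriv_nonneg (convex_Icc _ _) hV₂c.continuousOn
          (hV₂.differentiableOn) (fun x hx => h2 x (interior_subset hx))
      have hVqm : ∀ i : ℤ, V₂ qm ≤ V₂ (q i) := fun i =>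
        hmono2 ⟨le_rfl, hqm⟩ (hqmem i) (hbd i).1
      -- S (j-1) ≤ S j + γ₀ (V₂ (q j) - V₂ qm)
      have hSbound : S (j - 1) ≤ S j + γw 0 * (V₂ (q j) - V₂ qm) := by
        have := aux_sum_bound N' γw (fun k => V₂ (q (j + (k : ℤ) + 1))) (V₂ qm)
          (fun k hk => hγ_nonneg k (by omega)) (fun k hk => hγ_mono k (by omega))
          (fun k _ => hVqm _)
        rw [hdecomp]
        simp only [hSdef]
        linarith
      rcases le_total (S (j - 1)) (S j) with hle | hle
      · -- antitone: V₁ (S j) ≤ V₁ (S (j-1))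
        have hanti : AntitoneOn V₁ (attainSet γw (N' + 1) V₂ qm qM) :=
          antitoneOn_of_deriv_nonpos hconv (hV₁.continuous.continuousOn)
            ((hV₁.differentiable one_ne_zero).differentiableOn)
            (fun x hx => h1 x (interior_subset hx))
        have := hanti (hS (j - 1)) (hS j) hle
        nlinarith [mul_nonneg (mul_nonneg hL₁0 hL₂0) hγ0]
      · have h5 := lip1 (S j) (hS j) (S (j - 1)) (hS (j - 1))
        rw [abs_of_nonneg (sub_nonneg.mpr hle)] at h5
        have h6 : V₂ (q j) - V₂ qm ≤ L₂ * (q j - qm) :=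
          le_trans (le_abs_self _) hlip2j
        have h7 : S (j - 1) - S j ≤ γw 0 * (L₂ * (q j - qm)) := by
          have := mul_le_mul_of_nonneg_left h6 hγ0
          linarith
        have h8 := abs_le.mp h5
        nlinarith [mul_le_mul_of_nonneg_left h7 hL₁0]
    · -- V₁ monotone, V₂ nonincreasing
      have hmono2 : AntitoneOn V₂ (Set.Icc qm qM) :=
        antitoneOn_of_deriv_nonpos (convex_Icc _ _) hV₂c.continuousOn
          (hV₂.differentiableOn) (fun x hx => h2 x (interior_subset hx))
      have hVqm : ∀ i : ℤ, V₂ (q i) ≤ V₂ qm := fun i =>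
        hmono2 ⟨le_rfl, hqm⟩ (hqmem i) (hbd i).1
      -- S j ≤ S (j-1) + γ₀ (V₂ qm - V₂ (q j))
      have hSbound : S j ≤ S (j - 1) + γw 0 * (V₂ qm - V₂ (q j)) := by
        have := aux_sum_bound N' γw (fun k => -V₂ (q (j + (k : ℤ) + 1))) (-V₂ qm)
          (fun k hk => hγ_nonneg k (by omega)) (fun k hk => hγ_mono k (by omega))
          (fun k _ => neg_le_neg (hVqm _))
        rw [hdecomp]
        simp only [hSdef]
        simp only [mul_neg, Finset.sum_neg_distrib] at this
        linarith
      rcases le_total (S j) (S (j - 1)) with hle | hle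
      · have hmono : MonotoneOn V₁ (attainSet γw (N' + 1) V₂ qm qM) :=
          monotoneOn_of_deriv_nonneg hconv (hV₁.continuous.continuousOn)
            ((hV₁.differentiable one_ne_zero).differentiableOn)
            (fun x hx => h1 x (interior_subset hx))
        have := hmono (hS j) (hS (j - 1)) hle
        nlinarith [mul_nonneg (mul_nonneg hL₁0 hL₂0) hγ0]
      · have h5 := lip1 (S (j - 1)) (hS (j - 1)) (S j) (hS j)
        rw [abs_of_nonneg (sub_nonneg.mpr hle)] at h5
        have h6 : V₂ qm - V₂ (q j) ≤ L₂ * (q j - qm) := by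
          have := abs_le.mp hlip2j
          linarith [this.1]
        have h7 : S j - S (j - 1) ≤ γw 0 * (L₂ * (q j - qm)) := by
          have := mul_le_mul_of_nonneg_left h6 hγ0
          linarith
        have h8 := abs_le.mp h5
        nlinarith [mul_le_mul_of_nonneg_left h7 hL₁0]
  exact hmain
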